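/- Let T be a {−3}-self dual tournament on a vertex set V with |V| ≥ 8, and let a, b be two distinct vertices of T. If {a,b} is an interval of T, then δ⁺_T(a) = δ⁻_T(a). -/

import Mathlib

/-- A (finite) tournament on a vertex type `V`: for each pair of distinct
vertices exactly one arc. -/
structure Tournament (V : Type*) where
  arc : V → V → Prop
  irrefl : ∀ x, ¬ arc x x
  total : ∀ x y, x ≠ y → (arc x y ↔ ¬ arc y x)

namespace Tournament

variable {V W : Type*}

/-- The dual tournament, obtained by reversing all arcs. -/
def dual (T : Tournament V) : Tournament V where
  arc x y := T.arc y x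
  irrefl x := T.irrefl x
  total x y h := T.total y x (Ne.symm h)

/-- The subtournament induced on a subset `X` of the vertex set. -/
def restrict (T : Tournament V) (X : Set V) : Tournament X where
  arc x y := T.arc x y
  irrefl x := T.irrefl x
  total x y h := T.total x y (fun e => h (Subtype.ext e))

/-- Isomorphism of tournaments: an arc-preserving bijection. -/
def Iso (T : Tournament V) (T' : Tournament W) : Prop :=
  ∃ e : V ≃ W, ∀ x y, T.arc x y ↔ T'.arc (e x) (e y)

/-- `I` is an interval of `T`: every vertex outside `I` dominates all of `I`
or is dominated by all of `I`. -/
def IsInterval (T : Tournament V) (I : Set V) : Prop :=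
  ∀ x ∉ I, (∀ y ∈ I, T.arc x y) ∨ (∀ y ∈ I, T.arc y x)

/-- A tournament is indecomposable if all its intervals are trivial. -/
def Indecomposable (T : Tournament V) : Prop :=
  ∀ I : Set V, T.IsInterval I → I = ∅ ∨ I = Set.univ ∨ ∃ x, I = {x}

def Decomposable (T : Tournament V) : Prop := ¬ T.Indecomposable

/-- Transitive tournament (a linear order). -/
def Transitive (T : Tournament V) : Prop :=
  ∀ x y z, T.arc x y → T.arc y z → T.arc x z

/-- An almost transitive tournament is obtained from a transitive tournament
with at least 3 vertices by reversing the arc between its two extremal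
vertices. -/
def AlmostTransitive [Fintype V] (T : Tournament V) : Prop :=
  3 ≤ Fintype.card V ∧
  ∃ T₀ : Tournament V, T₀.Transitive ∧
    ∃ a b : V, a ≠ b ∧ (∀ y, y ≠ a → T₀.arc a y) ∧ (∀ y, y ≠ b → T₀.arc y b) ∧
      T.arc b a ∧
      ∀ x y, ¬ ((x = a ∧ y = b) ∨ (x = b ∧ y = a)) → (T.arc x y ↔ T₀.arc x y)

/-- Strong connectedness: a directed path between any two distinct vertices. -/
def StronglyConnected (T : Tournament V) : Prop :=
  ∀ x y : V, x ≠ y → Relation.TransGen T.arc x y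

/-- `{k}`-hypomorphy: the induced subtournaments on every `k`-element set of
vertices are isomorphic. -/
def Hypo (T T' : Tournament V) (k : ℕ) : Prop :=
  ∀ X : Set V, X.ncard = k → (T.restrict X).Iso (T'.restrict X)

/-- `{-k}`-hypomorphy, i.e. `{n-k}`-hypomorphy where `n` is the number of
vertices. -/
def MinusHypo [Fintype V] (T T' : Tournament V) (k : ℕ) : Prop :=
  Hypo T T' (Fintype.card V - k)

/-- Self duality. -/
def SelfDual (T : Tournament V) : Prop := T.Iso T.dual

/-- `{-k}`-self duality: removing any `k` vertices yields a self dual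
tournament. -/
def MinusSelfDual (T : Tournament V) (k : ℕ) : Prop :=
  ∀ X : Set V, X.ncard = k → (T.restrict Xᶜ).SelfDual

/-- `{-k}`-reconstructibility: every tournament `{-k}`-hypomorphic to `T` is
isomorphic to `T`. -/
def MinusReconstructible [Fintype V] (T : Tournament V) (k : ℕ) : Prop :=
  ∀ T' : Tournament V, MinusHypo T T' k → T.Iso T'

/-- Strong interval. -/
def IsStrongInterval (T : Tournament V) (X : Set V) : Prop :=
  T.IsInterval X ∧ ∀ Y : Set V, T.IsInterval Y → (X ∩ Y).Nonempty → X ⊆ Y ∨ Y ⊆ X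

/-- `P T` : the maximal strong intervals of `T` distinct from the full vertex
set. -/
def P (T : Tournament V) : Set (Set V) :=
  {X | X.Nonempty ∧ X ≠ Set.univ ∧ T.IsStrongInterval X ∧
    ∀ Y : Set V, Y ≠ Set.univ → T.IsStrongInterval Y → X ⊆ Y → X = Y}

/-- `Ptilde T` : equals `P T` when `T` is strongly connected; otherwise it
consists of the members of `P T` of size at least 2 together with the maximal
unions of consecutive singleton members (i.e. the maximal intervals of `T` all
of whose elements are singleton members of `P T`). -/
def Ptilde (T : Tournament V) : Set (Set V) :=
  {A | (T.StronglyConnected ∧ A ∈ T.P) ∨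
    (¬ T.StronglyConnected ∧
      ((A ∈ T.P ∧ 2 ≤ A.ncard) ∨
        (A.Nonempty ∧ (∀ x ∈ A, ({x} : Set V) ∈ T.P) ∧ T.IsInterval A ∧
          ∀ B : Set V, A ⊆ B → (∀ x ∈ B, ({x} : Set V) ∈ T.P) →
            T.IsInterval B → A = B)))}

/-- Equality of the quotients of `T` and `T'` by a common interval partition
`Part`: between any two distinct blocks, the arcs of `T` and `T'` agree. -/
def QuotientEq (T T' : Tournament V) (Part : Set (Set V)) : Prop :=
  ∀ X ∈ Part, ∀ Y ∈ Part, X ≠ Y → ∀ x ∈ X, ∀ y ∈ Y, (T.arc x y ↔ T'.arc x y)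

/-- The set of vertices outside `I` dominated by every vertex of `I`. -/
def Iplus (T : Tournament V) (I : Set V) : Set V :=
  {x | x ∉ I ∧ ∀ y ∈ I, T.arc y x}

/-- The set of vertices outside `I` dominating every vertex of `I`. -/
def Iminus (T : Tournament V) (I : Set V) : Set V :=
  {x | x ∉ I ∧ ∀ y ∈ I, T.arc x y}

/-- The 3-cycle `C₃`. -/
def C3Tour : Tournament (Fin 3) where
  arc x y := (x = 0 ∧ y = 1) ∨ (x = 1 ∧ y = 2) ∨ (x = 2 ∧ y = 0)
  irrefl := by decide
  total := by decide

/-- The transitive tournament `O_q` on `q` vertices. -/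
def LinOrd (q : ℕ) : Tournament (Fin q) where
  arc x y := x < y
  irrefl x := lt_irrefl x
  total x y h := by
    constructor
    · exact fun hxy hyx => lt_asymm hxy hyx
    · intro hyx
      exact lt_of_le_of_ne (not_lt.mp hyx) h

/-- The positive diamond `δ⁺` (on `{0,1,2,3}`, cycle `0→1→2→0`, all dominating
the center `3`). -/
def DeltaPlus : Tournament (Fin 4) where
  arc x y := (x = 0 ∧ y = 1) ∨ (x = 1 ∧ y = 2) ∨ (x = 2 ∧ y = 0) ∨
    (x = 0 ∧ y = 3) ∨ (x = 1 ∧ y = 3) ∨ (x = 2 ∧ y = 3)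
  irrefl := by decide
  total := by decide

/-- The negative diamond `δ⁻`. -/
def DeltaMinus : Tournament (Fin 4) := DeltaPlus.dual

/-- `T` embeds a diamond: some 4-element subset of the vertices induces a
diamond. -/
def EmbedsDiamond (T : Tournament V) : Prop :=
  ∃ X : Set V, X.ncard = 4 ∧
    ((T.restrict X).Iso DeltaPlus ∨ (T.restrict X).Iso DeltaMinus)

/-- `X` is a positive diamond of `T` with center `d`. -/
def IsPosDiamond (T : Tournament V) (X : Set V) (d : V) : Prop :=
  X.ncard = 4 ∧ d ∈ X ∧ (T.restrict X).Iso DeltaPlus ∧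
    (T.restrict (X \ {d})).Iso C3Tour ∧ ∀ y ∈ X \ {d}, T.arc y d

/-- `X` is a negative diamond of `T` with center `d`. -/
def IsNegDiamond (T : Tournament V) (X : Set V) (d : V) : Prop :=
  X.ncard = 4 ∧ d ∈ X ∧ (T.restrict X).Iso DeltaMinus ∧
    (T.restrict (X \ {d})).Iso C3Tour ∧ ∀ y ∈ X \ {d}, T.arc d y

/-- The tournament obtained from `H` by dilating the vertex `x` by `R`. -/
def Dilate {α β : Type*} (H : Tournament α) (x : α) (R : Tournament β) :
    Tournament ({y : α // y ≠ x} ⊕ β) where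
  arc u v :=
    match u, v with
    | .inl y, .inl z => H.arc y.1 z.1
    | .inl y, .inr _ => H.arc y.1 x
    | .inr _, .inl z => H.arc x z.1
    | .inr u, .inr v => R.arc u v
  irrefl u := by
    cases u with
    | inl y => exact H.irrefl y.1
    | inr u => exact R.irrefl u
  total u v h := by
    cases u with
    | inl y =>
      cases v with
      | inl z =>
        exact H.total y.1 z.1 (fun e => h (congrArg Sum.inl (Subtype.ext e)))
      | inr v => exact H.total y.1 x y.2
    | inr u =>
      cases v with
      | inl z => exact H.total x z.1 (Ne.symm z.2)
      | inr v => exact R.total u v (fun e => h (congrArg Sum.inr e))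

/-- The class `I_{n,K}` (for `K` a set of positive integers representing the
negative indices): tournaments on `n` vertices which are indecomposable, not
self dual, and `{-k}`-self dual for every `k ∈ K`. -/
def ClassI (n : ℕ) (K : Set ℕ) (R : Tournament (Fin n)) : Prop :=
  R.Indecomposable ∧ ¬ R.SelfDual ∧ ∀ k ∈ K, R.MinusSelfDual k

/-- Membership (up to isomorphism) in the class
`Ω_n = C₃(I_{n-2,{-1,-2,-3}}) ∪ O₃(I_{n-2,{-1,-2,-3}}) ∪ O₂(I_{n-1,{-2,-3}})`. -/
def InOmega (n : ℕ) (T : Tournament V) : Prop :=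
  (∃ R : Tournament (Fin (n - 2)), ClassI (n - 2) {1, 2, 3} R ∧
    ∃ x : Fin 3, T.Iso (Dilate C3Tour x R)) ∨
  (∃ R : Tournament (Fin (n - 2)), ClassI (n - 2) {1, 2, 3} R ∧
    ∃ x : Fin 3, T.Iso (Dilate (LinOrd 3) x R)) ∨
  (∃ R : Tournament (Fin (n - 1)), ClassI (n - 1) {2, 3} R ∧
    ∃ x : Fin 2, T.Iso (Dilate (LinOrd 2) x R))

end Tournament

section
open Tournament
namespace Stmt12Aux

open Tournament

variable {V : Type*}

lemma arc_ne {T : Tournament V} {x y : V} (h : T.arc x y) : x ≠ y := by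
  rintro rfl; exact T.irrefl x h

lemma arc_asymm {T : Tournament V} {x y : V} (h : T.arc x y) : ¬ T.arc y x := by
  intro h'
  exact ((T.total x y (arc_ne h)).mp h) h'

lemma arc_total {T : Tournament V} {x y : V} (hxy : x ≠ y) : T.arc x y ∨ T.arc y x := by
  by_cases h : T.arc x y
  · exact Or.inl h
  · exact Or.inr ((T.total y x (Ne.symm hxy)).mpr h)

/-- `C` is a 3-cycle (self-dual formulation). -/
def Cyc (T : Tournament V) (C : Set V) : Prop :=
  C.ncard = 3 ∧ (∀ x ∈ C, ∃ y ∈ C, T.arc x y) ∧ (∀ x ∈ C, ∃ y ∈ C, T.arc y x)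

/-- From `Cyc` extract a cyclic labeling. -/
lemma Cyc.labeling {T : Tournament V} {C : Set V} (h : Cyc T C) :
    ∃ u v w : V, C = {u, v, w} ∧ T.arc u v ∧ T.arc v w ∧ T.arc w u := by
  obtain ⟨h3, hout, hin⟩ := h
  obtain ⟨u, v, w, huv, huw, hvw, rfl⟩ := Set.ncard_eq_three.mp h3
  have hu : u ∈ ({u, v, w} : Set V) := by simp
  have hv : v ∈ ({u, v, w} : Set V) := by simp
  have hw : w ∈ ({u, v, w} : Set V) := by simp
  rcases arc_total (T := T) huv with h1 | h1
  · rcases arc_total (T := T) hvw with h2 | h2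
    · -- u→v, v→w; claim w→u
      have h3 : T.arc w u := by
        by_contra hwu
        obtain ⟨y, hy, hany⟩ := hout w hw
        rcases hy with rfl | rfl | rfl
        · exact hwu hany
        · exact (arc_asymm h2) hany
        · exact T.irrefl _ hany
      exact ⟨u, v, w, rfl, h1, h2, h3⟩
    · -- u→v, w→v : v has no out-neighbor
      exfalso
      obtain ⟨y, hy, hany⟩ := hout v hv
      rcases hy with rfl | rfl | rfl
      · exact (arc_asymm h1) hany
      · exact T.irrefl _ hany
      · exact (arc_asymm h2) hany
  · rcases arc_total (T := T) huw with h2 | h2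
    · -- v→u, u→w; claim w→v, cycle (u,w,v)
      have h3 : T.arc w v := by
        by_contra hwv
        obtain ⟨y, hy, hany⟩ := hout w hw
        rcases hy with rfl | rfl | rfl
        · exact (arc_asymm h2) hany
        · exact hwv hany
        · exact T.irrefl _ hany
      refine ⟨u, w, v, ?_, h2, h3, h1⟩
      ext z; simp; tauto
    · -- v→u, w→u : u has no out-neighbor
      exfalso
      obtain ⟨y, hy, hany⟩ := hout u hu
      rcases hy with rfl | rfl | rfl
      · exact T.irrefl _ hany
      · exact (arc_asymm h1) hany
      · exact (arc_asymm h2) hany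

/-- Conversely, a cyclic labeling gives `Cyc`. -/
lemma cyc_of_labeling {T : Tournament V} {u v w : V}
    (h1 : T.arc u v) (h2 : T.arc v w) (h3 : T.arc w u) :
    Cyc T ({u, v, w} : Set V) := by
  have huv := arc_ne h1
  have hvw := arc_ne h2
  have hwu := arc_ne h3
  refine ⟨?_, ?_, ?_⟩
  · exact Set.ncard_eq_three.mpr ⟨u, v, w, huv, Ne.symm hwu, hvw, rfl⟩
  · rintro x (rfl | rfl | rfl)
    · exact ⟨v, by simp, h1⟩
    · exact ⟨w, by simp, h2⟩
    · exact ⟨u, by simp, h3⟩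
  · rintro x (rfl | rfl | rfl)
    · exact ⟨w, by simp, h3⟩
    · exact ⟨u, by simp, h1⟩
    · exact ⟨v, by simp, h2⟩

end Stmt12Aux
end
section
open Tournament
namespace Stmt12Aux

variable {V : Type*}

/-- Support of a configuration. -/
def supp (t : V × V × Set V) : Set V := insert t.1 (insert t.2.1 t.2.2)

/-- Positive configurations inside `U`: a 3-cycle `C` dominating both `p` and `q`. -/
def cfgP (T : Tournament V) (U : Set V) : Set (V × V × Set V) :=
  {t | t.1 ∈ U ∧ t.2.1 ∈ U ∧ t.2.2 ⊆ U ∧ t.1 ≠ t.2.1 ∧ t.1 ∉ t.2.2 ∧ t.2.1 ∉ t.2.2 ∧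
      Cyc T t.2.2 ∧ ∀ c ∈ t.2.2, T.arc c t.1 ∧ T.arc c t.2.1}

/-- Negative configurations inside `U`: a 3-cycle `C` dominated by both `p` and `q`. -/
def cfgN (T : Tournament V) (U : Set V) : Set (V × V × Set V) :=
  {t | t.1 ∈ U ∧ t.2.1 ∈ U ∧ t.2.2 ⊆ U ∧ t.1 ≠ t.2.1 ∧ t.1 ∉ t.2.2 ∧ t.2.1 ∉ t.2.2 ∧
      Cyc T t.2.2 ∧ ∀ c ∈ t.2.2, T.arc t.1 c ∧ T.arc t.2.1 c}

lemma supp_ncard [Finite V] {T : Tournament V} {U : Set V} {t : V × V × Set V}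
    (h : t ∈ cfgP T U ∪ cfgN T U) : (supp t).ncard = 5 := by
  obtain ⟨p, q, C⟩ := t
  have h' : p ≠ q ∧ p ∉ C ∧ q ∉ C ∧ C.ncard = 3 := by
    rcases h with h | h <;> exact ⟨h.2.2.2.1, h.2.2.2.2.1, h.2.2.2.2.2.1, h.2.2.2.2.2.2.1.1⟩
  obtain ⟨hpq, hpC, hqC, h3⟩ := h'
  show (insert p (insert q C)).ncard = 5
  rw [Set.ncard_insert_of_notMem (by simp [hpq, hpC]) (Set.toFinite _),
    Set.ncard_insert_of_notMem hqC (Set.toFinite _), h3]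

lemma supp_subset {T : Tournament V} {U : Set V} {t : V × V × Set V}
    (h : t ∈ cfgP T U ∪ cfgN T U) : supp t ⊆ U := by
  have h' : t.1 ∈ U ∧ t.2.1 ∈ U ∧ t.2.2 ⊆ U := by
    rcases h with h | h <;> exact ⟨h.1, h.2.1, h.2.2.1⟩
  exact Set.insert_subset h'.1 (Set.insert_subset h'.2.1 h'.2.2)

lemma cfgP_eq_filter (T : Tournament V) (U : Set V) :
    cfgP T U = {t ∈ cfgP T Set.univ | supp t ⊆ U} := by
  ext ⟨p, q, C⟩
  simp only [cfgP, Set.mem_setOf_eq, Set.mem_univ, true_and, Set.subset_univ, supp,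
    Set.insert_subset_iff, Set.sep_setOf]
  tauto

lemma cfgN_eq_filter (T : Tournament V) (U : Set V) :
    cfgN T U = {t ∈ cfgN T Set.univ | supp t ⊆ U} := by
  ext ⟨p, q, C⟩
  simp only [cfgN, Set.mem_setOf_eq, Set.mem_univ, true_and, Set.subset_univ, supp,
    Set.insert_subset_iff, Set.sep_setOf]
  tauto

/-- Self-duality of `T.restrict U` swaps positive and negative configuration counts. -/
lemma cfg_ncard_eq_of_selfdual {T : Tournament V} {U : Set V}
    (h : (T.restrict U).SelfDual) : (cfgP T U).ncard = (cfgN T U).ncard := by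
  classical
  obtain ⟨e, he⟩ := h
  have he' : ∀ x y : U, T.arc x.1 y.1 ↔ T.arc (e y).1 (e x).1 := he
  set g : V → V := fun v => if hv : v ∈ U then (e ⟨v, hv⟩).1 else v with hg
  set g' : V → V := fun v => if hv : v ∈ U then (e.symm ⟨v, hv⟩).1 else v with hg'
  have hgU : ∀ v ∈ U, g v ∈ U := fun v hv => by simp only [hg, dif_pos hv]; exact (e ⟨v, hv⟩).2
  have hg'U : ∀ v ∈ U, g' v ∈ U := fun v hv => by simp only [hg', dif_pos hv]; exact (e.symm ⟨v, hv⟩).2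
  have hgg' : ∀ v ∈ U, g' (g v) = v := by
    intro v hv
    simp only [hg, hg', dif_pos hv, dif_pos (e ⟨v, hv⟩).2]
    rw [show (⟨(e ⟨v, hv⟩).1, _⟩ : U) = e ⟨v, hv⟩ from rfl, Equiv.symm_apply_apply]
  have hg'g : ∀ v ∈ U, g (g' v) = v := by
    intro v hv
    simp only [hg, hg', dif_pos hv, dif_pos (e.symm ⟨v, hv⟩).2]
    rw [show (⟨(e.symm ⟨v, hv⟩).1, _⟩ : U) = e.symm ⟨v, hv⟩ from rfl, Equiv.apply_symm_apply]
  have harc : ∀ x ∈ U, ∀ y ∈ U, (T.arc x y ↔ T.arc (g y) (g x)) := by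
    intro x hx y hy
    have := he' ⟨x, hx⟩ ⟨y, hy⟩
    simpa only [hg, dif_pos hx, dif_pos hy] using this
  have harc' : ∀ x ∈ U, ∀ y ∈ U, (T.arc x y ↔ T.arc (g' y) (g' x)) := by
    intro x hx y hy
    have h1 := harc (g' y) (hg'U y hy) (g' x) (hg'U x hx)
    rw [hg'g x hx, hg'g y hy] at h1
    exact h1.symm
  -- the two maps on configurations
  set Φ : V × V × Set V → V × V × Set V := fun t => (g t.1, g t.2.1, g '' t.2.2) with hΦ
  set Φ' : V × V × Set V → V × V × Set V := fun t => (g' t.1, g' t.2.1, g' '' t.2.2) with hΦ'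
  have hinj : Set.InjOn g U := by
    intro x hx y hy hxy
    rw [← hgg' x hx, ← hgg' y hy, hxy]
  have key : ∀ (gg gg' : V → V), (∀ v ∈ U, gg v ∈ U) → (∀ v ∈ U, gg' (gg v) = v) →
      (∀ x ∈ U, ∀ y ∈ U, (T.arc x y ↔ T.arc (gg y) (gg x))) →
      ∀ p q C, (p, q, C) ∈ cfgP T U → (gg p, gg q, gg '' C) ∈ cfgN T U := by
    intro gg gg' hggU hgginv hggarc p q C ht
    simp only [cfgP, Set.mem_setOf_eq] at ht
    obtain ⟨hp, hq, hC, hpq, hpC, hqC, ⟨h3, hout, hin⟩, harcs⟩ := ht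
    have hinj2 : Set.InjOn gg C := by
      intro x hx y hy hxy
      rw [← hgginv x (hC hx), ← hgginv y (hC hy), hxy]
    simp only [cfgN, Set.mem_setOf_eq]
    refine ⟨hggU p hp, hggU q hq, ?_, ?_, ?_, ?_, ⟨?_, ?_, ?_⟩, ?_⟩
    · rintro _ ⟨c, hc, rfl⟩; exact hggU c (hC hc)
    · intro hh
      apply hpq
      have h2 := congrArg gg' hh
      rwa [hgginv p hp, hgginv q hq] at h2
    · rintro ⟨c, hc, hcp⟩
      have h2 := congrArg gg' hcp
      rw [hgginv c (hC hc), hgginv p hp] at h2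
      rw [← h2] at hpC
      exact hpC hc
    · rintro ⟨c, hc, hcq⟩
      have h2 := congrArg gg' hcq
      rw [hgginv c (hC hc), hgginv q hq] at h2
      rw [← h2] at hqC
      exact hqC hc
    · rw [Set.ncard_image_of_injOn hinj2]; exact h3
    · rintro _ ⟨x, hx, rfl⟩
      obtain ⟨y, hy, hxy⟩ := hin x hx
      exact ⟨gg y, ⟨y, hy, rfl⟩, (hggarc y (hC hy) x (hC hx)).mp hxy⟩
    · rintro _ ⟨x, hx, rfl⟩
      obtain ⟨y, hy, hxy⟩ := hout x hx
      exact ⟨gg y, ⟨y, hy, rfl⟩, (hggarc x (hC hx) y (hC hy)).mp hxy⟩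
    · rintro _ ⟨c, hc, rfl⟩
      exact ⟨(hggarc c (hC hc) p hp).mp (harcs c hc).1,
        (hggarc c (hC hc) q hq).mp (harcs c hc).2⟩
  have key' : ∀ (gg gg' : V → V), (∀ v ∈ U, gg v ∈ U) → (∀ v ∈ U, gg' (gg v) = v) →
      (∀ x ∈ U, ∀ y ∈ U, (T.arc x y ↔ T.arc (gg y) (gg x))) →
      ∀ p q C, (p, q, C) ∈ cfgN T U → (gg p, gg q, gg '' C) ∈ cfgP T U := by
    intro gg gg' hggU hgginv hggarc p q C ht
    simp only [cfgN, Set.mem_setOf_eq] at ht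
    obtain ⟨hp, hq, hC, hpq, hpC, hqC, ⟨h3, hout, hin⟩, harcs⟩ := ht
    have hinj2 : Set.InjOn gg C := by
      intro x hx y hy hxy
      rw [← hgginv x (hC hx), ← hgginv y (hC hy), hxy]
    simp only [cfgP, Set.mem_setOf_eq]
    refine ⟨hggU p hp, hggU q hq, ?_, ?_, ?_, ?_, ⟨?_, ?_, ?_⟩, ?_⟩
    · rintro _ ⟨c, hc, rfl⟩; exact hggU c (hC hc)
    · intro hh
      apply hpq
      have h2 := congrArg gg' hh
      rwa [hgginv p hp, hgginv q hq] at h2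
    · rintro ⟨c, hc, hcp⟩
      have h2 := congrArg gg' hcp
      rw [hgginv c (hC hc), hgginv p hp] at h2
      rw [← h2] at hpC
      exact hpC hc
    · rintro ⟨c, hc, hcq⟩
      have h2 := congrArg gg' hcq
      rw [hgginv c (hC hc), hgginv q hq] at h2
      rw [← h2] at hqC
      exact hqC hc
    · rw [Set.ncard_image_of_injOn hinj2]; exact h3
    · rintro _ ⟨x, hx, rfl⟩
      obtain ⟨y, hy, hxy⟩ := hin x hx
      exact ⟨gg y, ⟨y, hy, rfl⟩, (hggarc y (hC hy) x (hC hx)).mp hxy⟩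
    · rintro _ ⟨x, hx, rfl⟩
      obtain ⟨y, hy, hxy⟩ := hout x hx
      exact ⟨gg y, ⟨y, hy, rfl⟩, (hggarc x (hC hx) y (hC hy)).mp hxy⟩
    · rintro _ ⟨c, hc, rfl⟩
      exact ⟨(hggarc p hp c (hC hc)).mp (harcs c hc).1,
        (hggarc q hq c (hC hc)).mp (harcs c hc).2⟩
  have himgcomp : ∀ C : Set V, C ⊆ U → g' '' (g '' C) = C := by
    intro C hC
    ext x
    constructor
    · rintro ⟨_, ⟨c, hc, rfl⟩, rfl⟩
      rwa [hgg' c (hC hc)]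
    · intro hx
      exact ⟨g x, ⟨x, hx, rfl⟩, hgg' x (hC hx)⟩
  have himgcomp' : ∀ C : Set V, C ⊆ U → g '' (g' '' C) = C := by
    intro C hC
    ext x
    constructor
    · rintro ⟨_, ⟨c, hc, rfl⟩, rfl⟩
      rwa [hg'g c (hC hc)]
    · intro hx
      exact ⟨g' x, ⟨x, hx, rfl⟩, hg'g x (hC hx)⟩
  have hΦ'Φ : ∀ t ∈ cfgP T U, Φ' (Φ t) = t := by
    rintro ⟨p, q, C⟩ ht
    have hp : p ∈ U := ht.1
    have hq : q ∈ U := ht.2.1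
    have hC : C ⊆ U := ht.2.2.1
    show (g' (g p), g' (g q), g' '' (g '' C)) = (p, q, C)
    rw [hgg' p hp, hgg' q hq, himgcomp C hC]
  have hΦΦ' : ∀ t ∈ cfgN T U, Φ (Φ' t) = t := by
    rintro ⟨p, q, C⟩ ht
    have hp : p ∈ U := ht.1
    have hq : q ∈ U := ht.2.1
    have hC : C ⊆ U := ht.2.2.1
    show (g (g' p), g (g' q), g '' (g' '' C)) = (p, q, C)
    rw [hg'g p hp, hg'g q hq, himgcomp' C hC]
  have himg : cfgN T U = Φ '' (cfgP T U) := by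
    apply Set.Subset.antisymm
    · intro t ht
      refine ⟨Φ' t, ?_, hΦΦ' t ht⟩
      obtain ⟨p, q, C⟩ := t
      exact key' g' g hg'U hg'g harc' p q C ht
    · rintro _ ⟨⟨p, q, C⟩, hs, rfl⟩
      exact key g g' hgU hgg' harc p q C hs
  rw [himg]
  rw [Set.ncard_image_of_injOn]
  intro s hs t ht hst
  rw [← hΦ'Φ s hs, ← hΦ'Φ t ht, hst]

end Stmt12Aux
end
section
open Tournament
namespace Stmt12Aux

variable {V : Type*}

lemma cfgP_diff (T : Tournament V) (U : Set V) (x : V) :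
    cfgP T (U \ {x}) = {t ∈ cfgP T U | x ∉ supp t} := by
  rw [cfgP_eq_filter T (U \ {x}), cfgP_eq_filter T U]
  ext t
  simp only [Set.mem_setOf_eq, Set.subset_diff, Set.disjoint_singleton_right, and_assoc]

lemma cfgN_diff (T : Tournament V) (U : Set V) (x : V) :
    cfgN T (U \ {x}) = {t ∈ cfgN T U | x ∉ supp t} := by
  rw [cfgN_eq_filter T (U \ {x}), cfgN_eq_filter T U]
  ext t
  simp only [Set.mem_setOf_eq, Set.subset_diff, Set.disjoint_singleton_right, and_assoc]

lemma delsum_aux [Fintype V] (S : Set (V × V × Set V)) (hS : ∀ t ∈ S, (supp t).ncard = 5) :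
    ∑ x : V, {t ∈ S | x ∉ supp t}.ncard = (Fintype.card V - 5) * S.ncard := by
  classical
  have hfin : S.Finite := Set.toFinite S
  set F := hfin.toFinset with hF
  have hcard : ∀ x : V, {t ∈ S | x ∉ supp t}.ncard = (F.filter (fun t => x ∉ supp t)).card := by
    intro x
    have : {t ∈ S | x ∉ supp t} = ↑(F.filter (fun t => x ∉ supp t)) := by
      ext t
      simp [hF, Set.Finite.mem_toFinset, Set.mem_setOf_eq]
    rw [this, Set.ncard_coe_finset]
  calc ∑ x : V, {t ∈ S | x ∉ supp t}.ncard
      = ∑ x : V, (F.filter (fun t => x ∉ supp t)).card := by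
        exact Finset.sum_congr rfl fun x _ => hcard x
    _ = ∑ x : V, ∑ t ∈ F, if x ∉ supp t then 1 else 0 := by
        exact Finset.sum_congr rfl fun x _ => Finset.card_filter _ _
    _ = ∑ t ∈ F, ∑ x : V, if x ∉ supp t then 1 else 0 := Finset.sum_comm
    _ = ∑ t ∈ F, (Finset.univ.filter (fun x => x ∉ supp t)).card := by
        exact Finset.sum_congr rfl fun t _ => (Finset.card_filter _ _).symm
    _ = ∑ t ∈ F, (Fintype.card V - 5) := by
        refine Finset.sum_congr rfl fun t ht => ?_
        have htS : t ∈ S := (Set.Finite.mem_toFinset hfin).mp ht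
        have h5 : (Finset.univ.filter (fun x => x ∈ supp t)).card = 5 := by
          have : (supp t).ncard = (Finset.univ.filter (fun x => x ∈ supp t)).card := by
            rw [Set.ncard_eq_toFinset_card']
            congr 1
            ext y
            simp
          rw [← this]
          exact hS t htS
        have := Finset.card_filter_add_card_filter_not
          (s := (Finset.univ : Finset V)) (p := fun x => x ∈ supp t)
        simp only [Finset.card_univ] at this
        omega
    _ = (Fintype.card V - 5) * S.ncard := by
        rw [Finset.sum_const, smul_eq_mul, ← Set.ncard_eq_toFinset_card S hfin]
        ring
lemma corank_step [Fintype V] (T : Tournament V) (U : Set V) (hU : 6 ≤ U.ncard)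
    (h : ∀ x ∈ U, (cfgP T (U \ {x})).ncard = (cfgN T (U \ {x})).ncard) :
    (cfgP T U).ncard = (cfgN T U).ncard := by
  classical
  set n := Fintype.card V with hn
  have hPsum : ∑ x : V, (cfgP T (U \ {x})).ncard = (n - 5) * (cfgP T U).ncard := by
    have h' := delsum_aux (cfgP T U) (fun t ht => supp_ncard (T := T) (U := U) (Or.inl ht))
    calc ∑ x : V, (cfgP T (U \ {x})).ncard
        = ∑ x : V, {t ∈ cfgP T U | x ∉ supp t}.ncard :=
          Finset.sum_congr rfl fun x _ => by rw [cfgP_diff]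
      _ = _ := h'
  have hNsum : ∑ x : V, (cfgN T (U \ {x})).ncard = (n - 5) * (cfgN T U).ncard := by
    have h' := delsum_aux (cfgN T U) (fun t ht => supp_ncard (T := T) (U := U) (Or.inr ht))
    calc ∑ x : V, (cfgN T (U \ {x})).ncard
        = ∑ x : V, {t ∈ cfgN T U | x ∉ supp t}.ncard :=
          Finset.sum_congr rfl fun x _ => by rw [cfgN_diff]
      _ = _ := h'
  set P := (cfgP T U).ncard with hP
  set N := (cfgN T U).ncard with hN
  set c := (Finset.univ.filter (fun x : V => x ∉ U)).card with hc
  set S := ∑ x ∈ Finset.univ.filter (fun x : V => x ∈ U), (cfgP T (U \ {x})).ncard with hS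
  have hSN : ∑ x ∈ Finset.univ.filter (fun x : V => x ∈ U), (cfgN T (U \ {x})).ncard = S := by
    rw [hS]
    exact Finset.sum_congr rfl fun x hx => (h x (by simpa using hx)).symm
  have hconstP : ∀ x ∈ Finset.univ.filter (fun x : V => x ∉ U), (cfgP T (U \ {x})).ncard = P := by
    intro x hx
    have hxU : x ∉ U := by simpa using hx
    rw [Set.diff_singleton_eq_self hxU]
  have hconstN : ∀ x ∈ Finset.univ.filter (fun x : V => x ∉ U), (cfgN T (U \ {x})).ncard = N := by
    intro x hx
    have hxU : x ∉ U := by simpa using hx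
    rw [Set.diff_singleton_eq_self hxU]
  have h1 : (n - 5) * P = S + c * P := by
    rw [← hPsum, ← Finset.sum_filter_add_sum_filter_not Finset.univ (fun x => x ∈ U)]
    congr 1
    rw [Finset.sum_congr rfl hconstP, Finset.sum_const, smul_eq_mul]
  have h2 : (n - 5) * N = S + c * N := by
    rw [← hNsum, ← Finset.sum_filter_add_sum_filter_not Finset.univ (fun x => x ∈ U), hSN,
      Finset.sum_congr rfl hconstN, Finset.sum_const, smul_eq_mul]
  have hUcard : (Finset.univ.filter (fun x : V => x ∈ U)).card = U.ncard := by
    rw [Set.ncard_eq_toFinset_card']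
    congr 1
    ext y
    simp
  have hcn : c + U.ncard = n := by
    have h3 := Finset.card_filter_add_card_filter_not
      (s := (Finset.univ : Finset V)) (p := fun x : V => x ∈ U)
    simp only [Finset.card_univ] at h3
    omega
  set k := U.ncard - 5 with hk
  have hnk : n - 5 = c + k := by omega
  rw [hnk, add_mul] at h1 h2
  rw [add_comm (c * P) (k * P)] at h1
  rw [add_comm (c * N) (k * N)] at h2
  have h1' : k * P = S := by
    rw [add_comm S (c * P)] at h1
    exact Nat.add_left_cancel (by linarith [h1] : c * P + k * P = c * P + S)
  have h2' : k * N = S := by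
    rw [add_comm S (c * N)] at h2
    exact Nat.add_left_cancel (by linarith [h2] : c * N + k * N = c * N + S)
  have : k * P = k * N := by rw [h1', h2']
  exact Nat.eq_of_mul_eq_mul_left (by omega) this
lemma cfg_eq_of_corank3 [Fintype V] (T : Tournament V) (hsd : T.MinusSelfDual 3)
    (U : Set V) (hU : U.ncard + 3 = Fintype.card V) :
    (cfgP T U).ncard = (cfgN T U).ncard := by
  have hXc : Uᶜ.ncard = 3 := by
    have h1 := Set.ncard_add_ncard_compl U
    rw [Nat.card_eq_fintype_card] at h1
    omega
  have h2 := hsd Uᶜ hXc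
  rw [compl_compl] at h2
  exact cfg_ncard_eq_of_selfdual h2

lemma cfg_eq_of_big [Fintype V] (T : Tournament V) (hsd : T.MinusSelfDual 3)
    (hcard : 8 ≤ Fintype.card V) :
    ∀ m : ℕ, ∀ U : Set V, U.ncard + 3 = Fintype.card V + m →
      (cfgP T U).ncard = (cfgN T U).ncard := by
  intro m
  induction m with
  | zero =>
    intro U hU
    exact cfg_eq_of_corank3 T hsd U (by omega)
  | succ m ih =>
    intro U hU
    apply corank_step T U (by omega)
    intro x hx
    apply ih
    rw [Set.ncard_diff_singleton_of_mem hx]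
    omega

lemma ncard_split {α : Type*} [Finite α] (S : Set α) (p : α → Prop) :
    S.ncard = {t ∈ S | p t}.ncard + {t ∈ S | ¬ p t}.ncard := by
  classical
  rw [← Set.ncard_union_eq ?_ (Set.toFinite _) (Set.toFinite _)]
  · congr 1
    ext t
    by_cases h : p t <;> simp [h]
  · rw [Set.disjoint_iff]
    rintro t ⟨⟨_, h1⟩, ⟨_, h2⟩⟩
    exact h2 h1
lemma subset_compl_pair {α : Type*} {s : Set α} {a b : α} :
    s ⊆ ({a, b} : Set α)ᶜ ↔ a ∉ s ∧ b ∉ s := by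
  constructor
  · intro h
    constructor
    · intro ha; exact (h ha) (by simp)
    · intro hb; exact (h hb) (by simp)
  · rintro ⟨h1, h2⟩ x hx hmem
    rcases hmem with rfl | rfl
    · exact h1 hx
    · exact h2 hx

lemma cfg_ab_eq [Fintype V] (T : Tournament V) (hsd : T.MinusSelfDual 3)
    (hcard : 8 ≤ Fintype.card V) (a b : V) (hab : a ≠ b) :
    {t ∈ cfgP T Set.univ | a ∈ supp t ∧ b ∈ supp t}.ncard =
    {t ∈ cfgN T Set.univ | a ∈ supp t ∧ b ∈ supp t}.ncard := by
  classical
  set n := Fintype.card V with hn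
  -- the four corank equalities
  have huniv : (Set.univ : Set V).ncard = n := by
    rw [Set.ncard_univ, Nat.card_eq_fintype_card]
  have hcompl : ∀ s : Set V, (sᶜ : Set V).ncard = n - s.ncard := by
    intro s
    have := Set.ncard_add_ncard_compl s
    rw [Nat.card_eq_fintype_card] at this
    omega
  have hsa : ({a} : Set V).ncard = 1 := Set.ncard_singleton a
  have hsab : ({a, b} : Set V).ncard = 2 := Set.ncard_pair hab
  have e0 : (cfgP T Set.univ).ncard = (cfgN T Set.univ).ncard :=
    cfg_eq_of_big T hsd hcard 3 _ (by omega)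
  have ea : (cfgP T ({a} : Set V)ᶜ).ncard = (cfgN T ({a} : Set V)ᶜ).ncard :=
    cfg_eq_of_big T hsd hcard 2 _ (by rw [hcompl, hsa]; omega)
  have eb : (cfgP T ({b} : Set V)ᶜ).ncard = (cfgN T ({b} : Set V)ᶜ).ncard :=
    cfg_eq_of_big T hsd hcard 2 _ (by rw [hcompl, Set.ncard_singleton]; omega)
  have eab : (cfgP T ({a, b} : Set V)ᶜ).ncard = (cfgN T ({a, b} : Set V)ᶜ).ncard :=
    cfg_eq_of_big T hsd hcard 1 _ (by rw [hcompl, hsab]; omega)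
  -- rewrite the compl-sets as filtered sets
  have fa : cfgP T ({a} : Set V)ᶜ = {t ∈ cfgP T Set.univ | a ∉ supp t} := by
    rw [cfgP_eq_filter]
    ext t
    simp [Set.subset_compl_singleton_iff]
  have fb : cfgP T ({b} : Set V)ᶜ = {t ∈ cfgP T Set.univ | b ∉ supp t} := by
    rw [cfgP_eq_filter]
    ext t
    simp [Set.subset_compl_singleton_iff]
  have fab : cfgP T ({a, b} : Set V)ᶜ = {t ∈ cfgP T Set.univ | a ∉ supp t ∧ b ∉ supp t} := by
    rw [cfgP_eq_filter]
    ext t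
    simp [subset_compl_pair]
  have ga : cfgN T ({a} : Set V)ᶜ = {t ∈ cfgN T Set.univ | a ∉ supp t} := by
    rw [cfgN_eq_filter]
    ext t
    simp [Set.subset_compl_singleton_iff]
  have gb : cfgN T ({b} : Set V)ᶜ = {t ∈ cfgN T Set.univ | b ∉ supp t} := by
    rw [cfgN_eq_filter]
    ext t
    simp [Set.subset_compl_singleton_iff]
  have gab : cfgN T ({a, b} : Set V)ᶜ = {t ∈ cfgN T Set.univ | a ∉ supp t ∧ b ∉ supp t} := by
    rw [cfgN_eq_filter]
    ext t
    simp [subset_compl_pair]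
  -- splits for an arbitrary config set
  have keycount : ∀ S : Set (V × V × Set V),
      S.ncard = {t ∈ S | a ∈ supp t ∧ b ∈ supp t}.ncard + {t ∈ S | a ∈ supp t ∧ b ∉ supp t}.ncard
        + ({t ∈ S | a ∉ supp t ∧ b ∈ supp t}.ncard + {t ∈ S | a ∉ supp t ∧ b ∉ supp t}.ncard) := by
    intro S
    rw [ncard_split S (fun t => a ∈ supp t)]
    congr 1
    · rw [ncard_split {t ∈ S | a ∈ supp t} (fun t => b ∈ supp t)]
      congr 2
      · ext t; simp only [Set.mem_setOf_eq]; tauto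
      · ext t; simp only [Set.mem_setOf_eq]; tauto
    · rw [ncard_split {t ∈ S | a ∉ supp t} (fun t => b ∈ supp t)]
      congr 2
      · ext t; simp only [Set.mem_setOf_eq]; tauto
      · ext t; simp only [Set.mem_setOf_eq]; tauto
  have keycount2 : ∀ S : Set (V × V × Set V),
      {t ∈ S | b ∉ supp t}.ncard
        = {t ∈ S | a ∈ supp t ∧ b ∉ supp t}.ncard + {t ∈ S | a ∉ supp t ∧ b ∉ supp t}.ncard := by
    intro S
    rw [ncard_split {t ∈ S | b ∉ supp t} (fun t => a ∈ supp t)]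
    congr 2
    · ext t; simp only [Set.mem_setOf_eq]; tauto
    · ext t; simp only [Set.mem_setOf_eq]; tauto
  have keycount3 : ∀ S : Set (V × V × Set V),
      {t ∈ S | a ∉ supp t}.ncard
        = {t ∈ S | a ∉ supp t ∧ b ∈ supp t}.ncard + {t ∈ S | a ∉ supp t ∧ b ∉ supp t}.ncard := by
    intro S
    rw [ncard_split {t ∈ S | a ∉ supp t} (fun t => b ∈ supp t)]
    congr 2
    · ext t; simp only [Set.mem_setOf_eq]; tauto
    · ext t; simp only [Set.mem_setOf_eq]; tauto
  rw [fa] at ea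
  rw [fb, gb] at eb
  rw [fab, gab] at eab
  rw [ga] at ea
  have h0P := keycount (cfgP T Set.univ)
  have h0N := keycount (cfgN T Set.univ)
  have hbP := keycount2 (cfgP T Set.univ)
  have hbN := keycount2 (cfgN T Set.univ)
  have haP := keycount3 (cfgP T Set.univ)
  have haN := keycount3 (cfgN T Set.univ)
  omega
lemma iso_C3_of_cycle {T : Tournament V} {u v w : V}
    (h1 : T.arc u v) (h2 : T.arc v w) (h3 : T.arc w u) :
    (T.restrict ({u, v, w} : Set V)).Iso C3Tour := by
  classical
  have huv := arc_ne h1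
  have hvw := arc_ne h2
  have hwu := arc_ne h3
  refine ⟨Equiv.mk
    (fun x => if x.1 = u then 0 else if x.1 = v then 1 else 2)
    (fun i => if i = 0 then ⟨u, by simp⟩ else if i = 1 then ⟨v, by simp⟩ else ⟨w, by simp⟩)
    ?_ ?_, ?_⟩
  · rintro ⟨x, hx⟩
    rcases hx with rfl | rfl | rfl
    · simp
    · simp [Ne.symm huv]
    · simp [hwu, Ne.symm hvw]
  · intro i
    rcases (by decide : ∀ j : Fin 3, j = 0 ∨ j = 1 ∨ j = 2) i with rfl | rfl | rfl
    · simp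
    · simp [Ne.symm huv]
    · simp [hwu, Ne.symm hvw]
  · rintro ⟨x, hx⟩ ⟨y, hy⟩
    rcases hx with rfl | rfl | rfl <;> rcases hy with rfl | rfl | rfl <;>
      simp [restrict, C3Tour, huv, hvw, hwu, Ne.symm huv, Ne.symm hvw, Ne.symm hwu,
        h1, h2, h3, arc_asymm h1, arc_asymm h2, arc_asymm h3, T.irrefl]

lemma iso_DeltaPlus_of {T : Tournament V} {u v w d : V}
    (h1 : T.arc u v) (h2 : T.arc v w) (h3 : T.arc w u)
    (hu : T.arc u d) (hv : T.arc v d) (hw : T.arc w d)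
    (hd : d ∉ ({u, v, w} : Set V)) :
    (T.restrict (insert d {u, v, w})).Iso DeltaPlus := by
  classical
  have huv := arc_ne h1
  have hvw := arc_ne h2
  have hwu := arc_ne h3
  have hdu : d ≠ u := fun h => hd (by simp [h])
  have hdv : d ≠ v := fun h => hd (by simp [h])
  have hdw : d ≠ w := fun h => hd (by simp [h])
  refine ⟨Equiv.mk
    (fun x => if x.1 = u then 0 else if x.1 = v then 1 else if x.1 = w then 2 else 3)
    (fun i => if i = 0 then ⟨u, by simp⟩ else if i = 1 then ⟨v, by simp⟩
      else if i = 2 then ⟨w, by simp⟩ else ⟨d, by simp⟩)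
    ?_ ?_, ?_⟩
  · rintro ⟨x, hx⟩
    rcases hx with rfl | rfl | rfl | rfl
    · simp [hdu, hdv, hdw]
    · simp
    · simp [Ne.symm huv]
    · simp [hwu, Ne.symm hvw]
  · intro i
    rcases (by decide : ∀ j : Fin 4, j = 0 ∨ j = 1 ∨ j = 2 ∨ j = 3) i with rfl | rfl | rfl | rfl
    · simp
    · simp [Ne.symm huv]
    · simp [hwu, Ne.symm hvw]
    · simp [hdu, hdv, hdw]
  · rintro ⟨x, hx⟩ ⟨y, hy⟩
    rcases hx with rfl | rfl | rfl | rfl <;> rcases hy with rfl | rfl | rfl | rfl <;>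
      simp [restrict, DeltaPlus, huv, hvw, hwu, Ne.symm huv, Ne.symm hvw, Ne.symm hwu,
        hdu, hdv, hdw, Ne.symm hdu, Ne.symm hdv, Ne.symm hdw,
        h1, h2, h3, hu, hv, hw, arc_asymm h1, arc_asymm h2, arc_asymm h3,
        arc_asymm hu, arc_asymm hv, arc_asymm hw, T.irrefl]

lemma iso_DeltaMinus_of {T : Tournament V} {u v w d : V}
    (h1 : T.arc u v) (h2 : T.arc v w) (h3 : T.arc w u)
    (hu : T.arc d u) (hv : T.arc d v) (hw : T.arc d w)
    (hd : d ∉ ({u, v, w} : Set V)) :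
    (T.restrict (insert d {u, v, w})).Iso DeltaMinus := by
  classical
  have huv := arc_ne h1
  have hvw := arc_ne h2
  have hwu := arc_ne h3
  have hdu : d ≠ u := fun h => hd (by simp [h])
  have hdv : d ≠ v := fun h => hd (by simp [h])
  have hdw : d ≠ w := fun h => hd (by simp [h])
  refine ⟨Equiv.mk
    (fun x => if x.1 = u then 0 else if x.1 = v then 2 else if x.1 = w then 1 else 3)
    (fun i => if i = 0 then ⟨u, by simp⟩ else if i = 2 then ⟨v, by simp⟩
      else if i = 1 then ⟨w, by simp⟩ else ⟨d, by simp⟩)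
    ?_ ?_, ?_⟩
  · rintro ⟨x, hx⟩
    rcases hx with rfl | rfl | rfl | rfl
    · simp [hdu, hdv, hdw]
    · simp
    · simp [Ne.symm huv]
    · simp [hwu, Ne.symm hvw]
  · intro i
    rcases (by decide : ∀ j : Fin 4, j = 0 ∨ j = 1 ∨ j = 2 ∨ j = 3) i with rfl | rfl | rfl | rfl
    · simp
    · simp [hwu, Ne.symm hvw]
    · simp [Ne.symm huv]
    · simp [hdu, hdv, hdw]
  · rintro ⟨x, hx⟩ ⟨y, hy⟩
    rcases hx with rfl | rfl | rfl | rfl <;> rcases hy with rfl | rfl | rfl | rfl <;>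
      simp [restrict, DeltaMinus, dual, DeltaPlus, huv, hvw, hwu, Ne.symm huv, Ne.symm hvw,
        Ne.symm hwu, hdu, hdv, hdw, Ne.symm hdu, Ne.symm hdv, Ne.symm hdw,
        h1, h2, h3, hu, hv, hw, arc_asymm h1, arc_asymm h2, arc_asymm h3,
        arc_asymm hu, arc_asymm hv, arc_asymm hw, T.irrefl]

lemma cyc_of_iso_C3 {T : Tournament V} {C : Set V} (h : (T.restrict C).Iso C3Tour) :
    Cyc T C := by
  obtain ⟨e, he⟩ := h
  set u := e.symm 0 with hu
  set v := e.symm 1 with hv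
  set w := e.symm 2 with hw
  have harc : ∀ i j : Fin 3, C3Tour.arc i j → T.arc (e.symm i).1 (e.symm j).1 := by
    intro i j hij
    have := he (e.symm i) (e.symm j)
    rw [Equiv.apply_symm_apply, Equiv.apply_symm_apply] at this
    exact this.mpr hij
  have h1 : T.arc u.1 v.1 := harc 0 1 (by simp [C3Tour])
  have h2 : T.arc v.1 w.1 := harc 1 2 (by simp [C3Tour])
  have h3 : T.arc w.1 u.1 := harc 2 0 (by simp [C3Tour])
  have hC : C = {u.1, v.1, w.1} := by
    ext x
    constructor
    · intro hx
      rcases (by decide : ∀ j : Fin 3, j = 0 ∨ j = 1 ∨ j = 2) (e ⟨x, hx⟩) with h0 | h0 | h0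
      · left; rw [hu, ← h0, Equiv.symm_apply_apply]
      · right; left; rw [hv, ← h0, Equiv.symm_apply_apply]
      · right; right; rw [hw, ← h0, Equiv.symm_apply_apply]; rfl
    · rintro (rfl | rfl | rfl)
      · exact u.2
      · exact v.2
      · exact w.2
  rw [hC]
  exact cyc_of_labeling h1 h2 h3
/-- The 3-cycles dominating both `a` and `b`. -/
def goodP (T : Tournament V) (a b : V) : Set (Set V) :=
  {C | Cyc T C ∧ a ∉ C ∧ b ∉ C ∧ ∀ c ∈ C, T.arc c a ∧ T.arc c b}

/-- The 3-cycles dominated by both `a` and `b`. -/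
def goodN (T : Tournament V) (a b : V) : Set (Set V) :=
  {C | Cyc T C ∧ a ∉ C ∧ b ∉ C ∧ ∀ c ∈ C, T.arc a c ∧ T.arc b c}

lemma no_twins_helper {T : Tournament V} {a b y z : V}
    (hI : T.IsInterval {a, b})
    (h1 : T.arc a y) (h2 : T.arc y z) (h3 : T.arc z a) (hb : b = y ∨ b = z) : False := by
  rcases hb with rfl | rfl
  · have hza : z ≠ a := arc_ne h3
    have hzb : z ≠ b := Ne.symm (arc_ne h2)
    rcases hI z (by simp [hza, hzb]) with h | h
    · exact arc_asymm h2 (h b (by simp))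
    · exact arc_asymm h3 (h a (by simp))
  · have hya : y ≠ a := Ne.symm (arc_ne h1)
    have hyb : y ≠ b := arc_ne h2
    rcases hI y (by simp [hya, hyb]) with h | h
    · exact arc_asymm h1 (h a (by simp))
    · exact arc_asymm h2 (h b (by simp))

lemma no_twins_in_cycle {T : Tournament V} {a b : V} (hab : a ≠ b)
    (hI : T.IsInterval {a, b}) {C : Set V} (hC : Cyc T C)
    (ha : a ∈ C) (hb : b ∈ C) : False := by
  obtain ⟨x, y, z, hCeq, h1, h2, h3⟩ := hC.labeling
  rw [hCeq] at ha hb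
  rcases ha with rfl | rfl | rfl
  · refine no_twins_helper hI h1 h2 h3 ?_
    rcases hb with rfl | hb' | hb'
    · exact absurd rfl hab
    · exact Or.inl hb'
    · exact Or.inr hb'
  · refine no_twins_helper hI h2 h3 h1 ?_
    rcases hb with hb' | rfl | hb'
    · exact Or.inr hb'
    · exact absurd rfl hab
    · exact Or.inl hb'
  · refine no_twins_helper hI h3 h1 h2 ?_
    rcases hb with hb' | hb' | rfl
    · exact Or.inl hb'
    · exact Or.inr hb'
    · exact absurd rfl hab

lemma not_mem_C_P {T : Tournament V} {a b : V} (hab : a ≠ b) (hI : T.IsInterval {a, b})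
    {p q : V} {C : Set V} (ht : (p, q, C) ∈ cfgP T Set.univ)
    (hbs : b ∈ supp (p, q, C)) : a ∉ C := by
  intro haC
  obtain ⟨-, -, -, hpq, hpC, hqC, hCyc, harcs⟩ := ht
  have hbs' : b = p ∨ b = q ∨ b ∈ C := by simpa [supp] using hbs
  have hbmem : b ∈ C → False := fun hbC => no_twins_in_cycle hab hI hCyc haC hbC
  rcases hbs' with rfl | rfl | hbC
  · obtain ⟨u, huC, hau⟩ := hCyc.2.1 a haC
    have hub : u ≠ b := fun h => hpC (h ▸ huC)
    have hua : u ≠ a := Ne.symm (arc_ne hau)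
    rcases hI u (by simp [hua, hub]) with h | h
    · exact arc_asymm hau (h a (by simp))
    · exact arc_asymm (harcs u huC).1 (h b (by simp))
  · obtain ⟨u, huC, hau⟩ := hCyc.2.1 a haC
    have hub : u ≠ b := fun h => hqC (h ▸ huC)
    have hua : u ≠ a := Ne.symm (arc_ne hau)
    rcases hI u (by simp [hua, hub]) with h | h
    · exact arc_asymm hau (h a (by simp))
    · exact arc_asymm (harcs u huC).2 (h b (by simp))
  · exact hbmem hbC

lemma not_mem_C_N {T : Tournament V} {a b : V} (hab : a ≠ b) (hI : T.IsInterval {a, b})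
    {p q : V} {C : Set V} (ht : (p, q, C) ∈ cfgN T Set.univ)
    (hbs : b ∈ supp (p, q, C)) : a ∉ C := by
  intro haC
  obtain ⟨-, -, -, hpq, hpC, hqC, hCyc, harcs⟩ := ht
  have hbs' : b = p ∨ b = q ∨ b ∈ C := by simpa [supp] using hbs
  have hbmem : b ∈ C → False := fun hbC => no_twins_in_cycle hab hI hCyc haC hbC
  rcases hbs' with rfl | rfl | hbC
  · obtain ⟨w, hwC, hwa⟩ := hCyc.2.2 a haC
    have hwb : w ≠ b := fun h => hpC (h ▸ hwC)
    have hwa' : w ≠ a := arc_ne hwa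
    rcases hI w (by simp [hwa', hwb]) with h | h
    · exact arc_asymm (harcs w hwC).1 (h b (by simp))
    · exact arc_asymm hwa (h a (by simp))
  · obtain ⟨w, hwC, hwa⟩ := hCyc.2.2 a haC
    have hwb : w ≠ b := fun h => hqC (h ▸ hwC)
    have hwa' : w ≠ a := arc_ne hwa
    rcases hI w (by simp [hwa', hwb]) with h | h
    · exact arc_asymm (harcs w hwC).2 (h b (by simp))
    · exact arc_asymm hwa (h a (by simp))
  · exact hbmem hbC
lemma cfgP_ab_char {T : Tournament V} {a b : V} (hab : a ≠ b) (hI : T.IsInterval {a, b}) :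
    {t ∈ cfgP T Set.univ | a ∈ supp t ∧ b ∈ supp t} =
      (fun C => (a, b, C)) '' goodP T a b ∪ (fun C => (b, a, C)) '' goodP T a b := by
  have hI' : T.IsInterval {b, a} := by rwa [Set.pair_comm]
  ext ⟨p, q, C⟩
  constructor
  · rintro ⟨ht, has, hbs⟩
    have haC : a ∉ C := not_mem_C_P hab hI ht hbs
    have hbC : b ∉ C := not_mem_C_P (Ne.symm hab) hI' ht has
    obtain ⟨-, -, -, hpq, hpC, hqC, hCyc, harcs⟩ := ht
    have has' : a = p ∨ a = q := by
      have h0 : a = p ∨ a = q ∨ a ∈ C := by simpa [supp] using has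
      tauto
    have hbs' : b = p ∨ b = q := by
      have h0 : b = p ∨ b = q ∨ b ∈ C := by simpa [supp] using hbs
      tauto
    rcases has' with h1 | h1 <;> rcases hbs' with h2 | h2
    · exact absurd (h1.trans h2.symm) hab
    · refine Or.inl ⟨C, ⟨hCyc, haC, hbC, fun c hc => ?_⟩, by rw [h1, h2]⟩
      exact ⟨by rw [h1]; exact (harcs c hc).1, by rw [h2]; exact (harcs c hc).2⟩
    · refine Or.inr ⟨C, ⟨hCyc, haC, hbC, fun c hc => ?_⟩, by rw [h1, h2]⟩
      exact ⟨by rw [h1]; exact (harcs c hc).2, by rw [h2]; exact (harcs c hc).1⟩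
    · exact absurd (h1.trans h2.symm) hab
  · rintro (⟨C', ⟨hCyc, haC, hbC, harcs⟩, heq⟩ | ⟨C', ⟨hCyc, haC, hbC, harcs⟩, heq⟩)
    · simp only at heq
      injection heq with e1 e2
      injection e2 with e2 e3
      subst e1; subst e2; subst e3
      refine ⟨⟨Set.mem_univ _, Set.mem_univ _, Set.subset_univ _, hab, haC, hbC, hCyc,
        fun c hc => harcs c hc⟩, by simp [supp], by simp [supp]⟩
    · simp only at heq
      injection heq with e1 e2
      injection e2 with e2 e3
      subst e1; subst e2; subst e3
      refine ⟨⟨Set.mem_univ _, Set.mem_univ _, Set.subset_univ _, Ne.symm hab, hbC, haC, hCyc,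
        fun c hc => ⟨(harcs c hc).2, (harcs c hc).1⟩⟩, by simp [supp], by simp [supp]⟩

lemma cfgN_ab_char {T : Tournament V} {a b : V} (hab : a ≠ b) (hI : T.IsInterval {a, b}) :
    {t ∈ cfgN T Set.univ | a ∈ supp t ∧ b ∈ supp t} =
      (fun C => (a, b, C)) '' goodN T a b ∪ (fun C => (b, a, C)) '' goodN T a b := by
  have hI' : T.IsInterval {b, a} := by rwa [Set.pair_comm]
  ext ⟨p, q, C⟩
  constructor
  · rintro ⟨ht, has, hbs⟩
    have haC : a ∉ C := not_mem_C_N hab hI ht hbs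
    have hbC : b ∉ C := not_mem_C_N (Ne.symm hab) hI' ht has
    obtain ⟨-, -, -, hpq, hpC, hqC, hCyc, harcs⟩ := ht
    have has' : a = p ∨ a = q := by
      have h0 : a = p ∨ a = q ∨ a ∈ C := by simpa [supp] using has
      tauto
    have hbs' : b = p ∨ b = q := by
      have h0 : b = p ∨ b = q ∨ b ∈ C := by simpa [supp] using hbs
      tauto
    rcases has' with h1 | h1 <;> rcases hbs' with h2 | h2
    · exact absurd (h1.trans h2.symm) hab
    · refine Or.inl ⟨C, ⟨hCyc, haC, hbC, fun c hc => ?_⟩, by rw [h1, h2]⟩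
      exact ⟨by rw [h1]; exact (harcs c hc).1, by rw [h2]; exact (harcs c hc).2⟩
    · refine Or.inr ⟨C, ⟨hCyc, haC, hbC, fun c hc => ?_⟩, by rw [h1, h2]⟩
      exact ⟨by rw [h1]; exact (harcs c hc).2, by rw [h2]; exact (harcs c hc).1⟩
    · exact absurd (h1.trans h2.symm) hab
  · rintro (⟨C', ⟨hCyc, haC, hbC, harcs⟩, heq⟩ | ⟨C', ⟨hCyc, haC, hbC, harcs⟩, heq⟩)
    · simp only at heq
      injection heq with e1 e2
      injection e2 with e2 e3
      subst e1; subst e2; subst e3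
      refine ⟨⟨Set.mem_univ _, Set.mem_univ _, Set.subset_univ _, hab, haC, hbC, hCyc,
        fun c hc => harcs c hc⟩, by simp [supp], by simp [supp]⟩
    · simp only at heq
      injection heq with e1 e2
      injection e2 with e2 e3
      subst e1; subst e2; subst e3
      refine ⟨⟨Set.mem_univ _, Set.mem_univ _, Set.subset_univ _, Ne.symm hab, hbC, haC, hCyc,
        fun c hc => ⟨(harcs c hc).2, (harcs c hc).1⟩⟩, by simp [supp], by simp [supp]⟩

lemma ncard_pair_union {α : Type*} [Finite α] {a b : α} (hab : a ≠ b) (s : Set (Set α)) :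
    ((fun C => (a, b, C)) '' s ∪ (fun C => (b, a, C)) '' s :
      Set (α × α × Set α)).ncard = 2 * s.ncard := by
  have hinj1 : Set.InjOn (fun C : Set α => (a, b, C)) s := by
    intro C1 _ C2 _ h
    exact congrArg (fun t : α × α × Set α => t.2.2) h
  have hinj2 : Set.InjOn (fun C : Set α => (b, a, C)) s := by
    intro C1 _ C2 _ h
    exact congrArg (fun t : α × α × Set α => t.2.2) h
  rw [Set.ncard_union_eq ?_ (Set.toFinite _) (Set.toFinite _),
    Set.ncard_image_of_injOn hinj1, Set.ncard_image_of_injOn hinj2]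
  · omega
  · rw [Set.disjoint_left]
    rintro t ⟨C1, -, rfl⟩ ⟨C2, -, heq⟩
    exact hab (congrArg (fun t : α × α × Set α => t.1) heq).symm
lemma posdiamond_set_eq [Finite V] {T : Tournament V} {a b : V} (hab : a ≠ b)
    (hI : T.IsInterval {a, b}) :
    {X : Set V | T.IsPosDiamond X a} = (fun C => insert a C) '' goodP T a b := by
  ext X
  constructor
  · rintro ⟨h4, haX, hDP, hC3, harc⟩
    set C := X \ {a} with hCdef
    have hCyc : Cyc T C := cyc_of_iso_C3 hC3
    have hbC : b ∉ C := by
      intro hbC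
      obtain ⟨u, huC, hbu⟩ := hCyc.2.1 b hbC
      have hub : u ≠ b := Ne.symm (arc_ne hbu)
      have hua : u ≠ a := fun h => huC.2 (by simp [h])
      rcases hI u (by simp [hua, hub]) with h | h
      · exact arc_asymm hbu (h b (by simp))
      · exact arc_asymm (harc u huC) (h a (by simp))
    refine ⟨C, ⟨hCyc, by simp [hCdef], hbC, fun c hc => ⟨harc c hc, ?_⟩⟩, ?_⟩
    · have hca : c ≠ a := fun h => hc.2 (by simp [h])
      have hcb : c ≠ b := fun h => hbC (h ▸ hc)
      rcases hI c (by simp [hca, hcb]) with h | h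
      · exact h b (by simp)
      · exact absurd (h a (by simp)) (arc_asymm (harc c hc))
    · show insert a (X \ {a}) = X
      rw [Set.insert_diff_singleton, Set.insert_eq_of_mem haX]
  · rintro ⟨C, ⟨hCyc, haC, hbC, harcs⟩, rfl⟩
    obtain ⟨u, v, w, hCeq, h1, h2, h3⟩ := hCyc.labeling
    have hu : u ∈ C := by rw [hCeq]; simp
    have hv : v ∈ C := by rw [hCeq]; simp
    have hw : w ∈ C := by rw [hCeq]; simp
    refine ⟨?_, Set.mem_insert _ _, ?_, ?_, ?_⟩
    · rw [Set.ncard_insert_of_notMem haC (Set.toFinite _), hCyc.1]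
    · rw [hCeq]
      exact iso_DeltaPlus_of h1 h2 h3 (harcs u hu).1 (harcs v hv).1 (harcs w hw).1
        (by rw [← hCeq]; exact haC)
    · rw [Set.insert_diff_self_of_notMem haC, hCeq]
      exact iso_C3_of_cycle h1 h2 h3
    · intro y hy
      rw [Set.insert_diff_self_of_notMem haC] at hy
      exact (harcs y hy).1

lemma negdiamond_set_eq [Finite V] {T : Tournament V} {a b : V} (hab : a ≠ b)
    (hI : T.IsInterval {a, b}) :
    {X : Set V | T.IsNegDiamond X a} = (fun C => insert a C) '' goodN T a b := by
  ext X
  constructor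
  · rintro ⟨h4, haX, hDM, hC3, harc⟩
    set C := X \ {a} with hCdef
    have hCyc : Cyc T C := cyc_of_iso_C3 hC3
    have hbC : b ∉ C := by
      intro hbC
      obtain ⟨u, huC, hub⟩ := hCyc.2.2 b hbC
      have hub' : u ≠ b := arc_ne hub
      have hua : u ≠ a := fun h => huC.2 (by simp [h])
      rcases hI u (by simp [hua, hub']) with h | h
      · exact arc_asymm (harc u huC) (h a (by simp))
      · exact arc_asymm hub (h b (by simp))
    refine ⟨C, ⟨hCyc, by simp [hCdef], hbC, fun c hc => ⟨harc c hc, ?_⟩⟩, ?_⟩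
    · have hca : c ≠ a := fun h => hc.2 (by simp [h])
      have hcb : c ≠ b := fun h => hbC (h ▸ hc)
      rcases hI c (by simp [hca, hcb]) with h | h
      · exact absurd (h a (by simp)) (arc_asymm (harc c hc))
      · exact h b (by simp)
    · show insert a (X \ {a}) = X
      rw [Set.insert_diff_singleton, Set.insert_eq_of_mem haX]
  · rintro ⟨C, ⟨hCyc, haC, hbC, harcs⟩, rfl⟩
    obtain ⟨u, v, w, hCeq, h1, h2, h3⟩ := hCyc.labeling
    have hu : u ∈ C := by rw [hCeq]; simp
    have hv : v ∈ C := by rw [hCeq]; simp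
    have hw : w ∈ C := by rw [hCeq]; simp
    refine ⟨?_, Set.mem_insert _ _, ?_, ?_, ?_⟩
    · rw [Set.ncard_insert_of_notMem haC (Set.toFinite _), hCyc.1]
    · rw [hCeq]
      exact iso_DeltaMinus_of h1 h2 h3 (harcs u hu).1 (harcs v hv).1 (harcs w hw).1
        (by rw [← hCeq]; exact haC)
    · rw [Set.insert_diff_self_of_notMem haC, hCeq]
      exact iso_C3_of_cycle h1 h2 h3
    · intro y hy
      rw [Set.insert_diff_self_of_notMem haC] at hy
      exact (harcs y hy).1
end Stmt12Aux
end

/-- Let `T` be a `{-3}`-self dual tournament on `V` with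
`|V| ≥ 8` and `a ≠ b` two vertices. If `{a,b}` is an interval of `T`, then
`δ⁺_T(a) = δ⁻_T(a)`. -/
theorem stmt12 {V : Type*} [Fintype V] (T : Tournament V)
    (hcard : 8 ≤ Fintype.card V) (hsd : T.MinusSelfDual 3) (a b : V)
    (hab : a ≠ b) (hI : T.IsInterval {a, b}) :
    {X : Set V | T.IsPosDiamond X a}.ncard =
      {X : Set V | T.IsNegDiamond X a}.ncard := by
  classical
  open Stmt12Aux in
  have hgood : (goodP T a b).ncard = (goodN T a b).ncard := by
    have h := cfg_ab_eq T hsd hcard a b hab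
    rw [cfgP_ab_char hab hI, cfgN_ab_char hab hI,
      ncard_pair_union hab (goodP T a b), ncard_pair_union hab (goodN T a b)] at h
    omega
  have hinj : ∀ s : Set (Set V), (∀ C ∈ s, a ∉ C) →
      Set.InjOn (fun C => insert a C) s := by
    intro s hs C1 h1 C2 h2 h
    have h' := congrArg (fun t : Set V => t \ ({a} : Set V)) h
    simpa [Set.insert_diff_self_of_notMem (hs C1 h1),
      Set.insert_diff_self_of_notMem (hs C2 h2)] using h'
  rw [Stmt12Aux.posdiamond_set_eq hab hI, Stmt12Aux.negdiamond_set_eq hab hI,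
    Set.ncard_image_of_injOn (hinj _ fun C hC => hC.2.1),
    Set.ncard_image_of_injOn (hinj _ fun C hC => hC.2.1), hgood]
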